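/- arXiv:2407.07584 — 2 statements merged into one kernel-verified Lean document; each statement's English description precedes it below -/
import Mathlib

section
/- Let R be a transitive (equivalence) relation on the state space of an LMC that only relates equally labeled states. Then R is an ε-APB (|P(s)(A) − P(t)(A)| ≤ ε for all (s,t) ∈ R and all R-closed A) if and only if R is an ε-bisimulation (P(s)(A) ≤ P(t)(R(A)) + ε for all (s,t) ∈ R and all A ⊆ S). -/
open scoped BigOperators

attribute [local instance] Classical.propDecidable

/-- Mass that a (sub)distribution `μ` assigns to a set `A`. -/
noncomputable def pmass {S : Type*} (μ : S → ℝ) (A : Set S) : ℝ := ∑' a : A, μ a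

/-- L1-distance between two functions `S → ℝ`. -/
noncomputable def l1dist {S : Type*} (μ ν : S → ℝ) : ℝ := ∑' s, |μ s - ν s|

/-- `μ : S → ℝ` is a probability distribution. -/
def IsDistr {S : Type*} (μ : S → ℝ) : Prop :=
  (∀ s, 0 ≤ μ s) ∧ (∀ s, μ s ≤ 1) ∧ HasSum μ 1

/-- Image of a set under a relation. -/
def relImg {S : Type*} (R : S → S → Prop) (A : Set S) : Set S := {t | ∃ s ∈ A, R s t}

/-- ε-bisimulation on a labeled Markov chain with transition function `P` and labeling `lab`. -/
def IsEpsBisim {S L : Type*} (P : S → S → ℝ) (lab : S → L) (ε : ℝ)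
    (R : S → S → Prop) : Prop :=
  Reflexive R ∧ Symmetric R ∧
    ∀ s t, R s t → lab s = lab t ∧
      ∀ A : Set S, pmass (P s) A ≤ pmass (P t) (relImg R A) + ε

/-- ε-APB (approximate probabilistic bisimulation with precision ε). -/
def IsEpsAPB {S L : Type*} (P : S → S → ℝ) (lab : S → L) (ε : ℝ)
    (R : S → S → Prop) : Prop :=
  Reflexive R ∧ Symmetric R ∧
    ∀ s t, R s t → lab s = lab t ∧
      ∀ A : Set S, relImg R A ⊆ A → |pmass (P s) A - pmass (P t) A| ≤ ε

/-- Weight of a finite path witnessing `B U A` starting at `s` and continuing along the list. -/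
noncomputable def untilWeight {S : Type*} (P : S → S → ℝ) (B A : Set S) :
    S → List S → ℝ
  | s, [] => if s ∈ A then 1 else 0
  | s, t :: rest =>
      if s ∈ A then 0 else if s ∈ B then P s t * untilWeight P B A t rest else 0

/-- `Pr_s(B U A)`: probability of reaching `A` from `s` via states in `B`. -/
noncomputable def untilProb {S : Type*} (P : S → S → ℝ) (B A : Set S) (s : S) : ℝ :=
  ∑' l : List S, untilWeight P B A s l

/-- `Pr_s(□C)`: probability of staying in `C` forever, `= 1 - Pr_s(C U Cᶜ)`. -/
noncomputable def boxProb {S : Type*} (P : S → S → ℝ) (C : Set S) (s : S) : ℝ :=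
  1 - untilProb P C Cᶜ s

/-- Weak ε-bisimulation. -/
def IsWeakEpsBisim {S L : Type*} (P : S → S → ℝ) (lab : S → L) (ε : ℝ)
    (R : S → S → Prop) : Prop :=
  Reflexive R ∧ Symmetric R ∧
    ∀ s t, R s t → lab s = lab t ∧
      ∀ A : Set S, untilProb P {u | lab u = lab s} A s ≤
        untilProb P {u | lab u = lab t} (relImg R A) t + ε

/-- Weak ε-bisimilarity of two states. -/
def WeakEpsBisimilar {S L : Type*} (P : S → S → ℝ) (lab : S → L) (ε : ℝ)
    (s t : S) : Prop :=
  ∃ R, IsWeakEpsBisim P lab ε R ∧ R s t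

/-- Up-to-(n,ε)-bisimilarity. -/
def upTo {S L : Type*} (P : S → S → ℝ) (lab : S → L) (ε : ℝ) :
    ℕ → S → S → Prop
  | 0, _, _ => True
  | n + 1, s, t => lab s = lab t ∧
      ∀ A : Set S,
        pmass (P s) A ≤ pmass (P t) (relImg (upTo P lab ε n) A) + ε ∧
        pmass (P t) A ≤ pmass (P s) (relImg (upTo P lab ε n) A) + ε

/-- Branching ε-bisimulation. -/
def IsBranchingEpsBisim {S L : Type*} (P : S → S → ℝ) (lab : S → L) (ε : ℝ)
    (R : S → S → Prop) : Prop :=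
  Equivalence R ∧
    ∀ s t, R s t → lab s = lab t ∧
      ∀ A : Set S, relImg R A ⊆ A →
        |untilProb P {u | R s u} A s - untilProb P {u | R t u} A t| ≤ ε

/-- Transitive ε-bisimulation (equivalently, an ε-APB which is an equivalence). -/
def IsTransEpsBisim {S L : Type*} (P : S → S → ℝ) (lab : S → L) (ε : ℝ)
    (R : S → S → Prop) : Prop :=
  Equivalence R ∧
    ∀ s t, R s t → lab s = lab t ∧
      ∀ A : Set S, relImg R A ⊆ A → |pmass (P s) A - pmass (P t) A| ≤ ε

/-- Exact probabilistic bisimulation. -/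
def IsExactBisim {S L : Type*} (P : S → S → ℝ) (lab : S → L)
    (R : S → S → Prop) : Prop :=
  Equivalence R ∧
    ∀ s t, R s t → lab s = lab t ∧
      ∀ c, pmass (P s) {u | R c u} = pmass (P t) {u | R c u}

/-- `Pr_s(◇^{≤k} G)`: probability of reaching `G` from `s` within `k` steps. -/
noncomputable def reachLe {S : Type*} (P : S → S → ℝ) (G : Set S) :
    ℕ → S → ℝ
  | 0, s => if s ∈ G then 1 else 0
  | k + 1, s => if s ∈ G then 1 else ∑' t, P s t * reachLe P G k t

lemma pmass_mono' {S : Type*} {μ : S → ℝ} (hμ : ∀ s, 0 ≤ μ s) (hsum : Summable μ)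
    {A B : Set S} (hAB : A ⊆ B) : pmass μ A ≤ pmass μ B := by
  unfold pmass
  rw [tsum_subtype, tsum_subtype]
  exact Summable.tsum_le_tsum
    (fun s => Set.indicator_le_indicator_of_subset hAB hμ s)
    (hsum.indicator _) (hsum.indicator _)

theorem transitive_epsAPB_iff_epsBisim {S L : Type*} [Countable S] [Nonempty S]
    (P : S → S → ℝ) (lab : S → L)
    (hP : ∀ s, IsDistr (P s)) (ε : ℝ)
    (R : S → S → Prop) (hR : Equivalence R)
    (hlab : ∀ s t, R s t → lab s = lab t) :
    IsEpsAPB P lab ε R ↔ IsEpsBisim P lab ε R := by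
  have hsumm : ∀ s, Summable (P s) := fun s => (hP s).2.2.summable
  have hnn : ∀ s u, 0 ≤ P s u := fun s => (hP s).1
  constructor
  · rintro ⟨hrefl, hsymm, h⟩
    refine ⟨hrefl, hsymm, fun s t hst => ⟨hlab s t hst, fun A => ?_⟩⟩
    have hclosed : relImg R (relImg R A) ⊆ relImg R A := by
      rintro u ⟨v, ⟨w, hwA, hwv⟩, hvu⟩
      exact ⟨w, hwA, hR.trans hwv hvu⟩
    have hsub : A ⊆ relImg R A := fun a ha => ⟨a, ha, hR.refl a⟩
    have h1 := abs_le.mp ((h s t hst).2 (relImg R A) hclosed)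
    linarith [pmass_mono' (hnn s) (hsumm s) hsub]
  · rintro ⟨hrefl, hsymm, h⟩
    refine ⟨hrefl, hsymm, fun s t hst => ⟨hlab s t hst, fun A hA => ?_⟩⟩
    have heq : relImg R A = A :=
      Set.Subset.antisymm hA (fun a ha => ⟨a, ha, hR.refl a⟩)
    have h1 := (h s t hst).2 A
    have h2 := (h t s (hR.symm hst)).2 A
    rw [heq] at h1 h2
    rw [abs_le]
    constructor <;> linarith
end

section
/- Let M be a finite LMC with states S, and let R be an equivalence on S relating only equally labeled states and such that for each equivalence class A ∈ S/R there is a distribution P*_A on S/R with |P(s)(C) − P*_A(C)| ≤ ε/2 for all s ∈ A and all R-closed sets C. Then there exists an ε-perturbation M' of M (i.e., ‖P(s) − P'(s)‖₁ ≤ ε for all s) on which R is an exact probabilistic bisimulation. -/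
open scoped BigOperators

attribute [local instance] Classical.propDecidable

lemma pmass_eq_sum' {S : Type*} [Fintype S] (μ : S → ℝ) (A : Set S) :
    pmass μ A = ∑ t ∈ Finset.univ.filter (· ∈ A), μ t := by
  classical
  rw [pmass, tsum_subtype, tsum_fintype, Finset.sum_filter]
  refine Finset.sum_congr rfl fun t _ => ?_
  by_cases h : t ∈ A <;> simp [Set.indicator, h]

lemma pmass_nonneg' {S : Type*} [Fintype S] {μ : S → ℝ} (h : ∀ s, 0 ≤ μ s) (A : Set S) :
    0 ≤ pmass μ A := by
  rw [pmass_eq_sum']; exact Finset.sum_nonneg fun t _ => h t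


theorem perturbation_of_centroid {S L : Type*} [Fintype S] [Nonempty S]
    (P : S → S → ℝ) (lab : S → L)
    (hP : ∀ s, IsDistr (P s)) (ε : ℝ)
    (R : S → S → Prop) (hR : Equivalence R)
    (hlab : ∀ s t, R s t → lab s = lab t)
    (hcentroid : ∀ a : S, ∃ μ : S → ℝ, IsDistr μ ∧
      ∀ s, R a s → ∀ C : Set S, relImg R C ⊆ C →
        |pmass (P s) C - pmass μ C| ≤ ε / 2) :
    ∃ P' : S → S → ℝ, (∀ s, IsDistr (P' s)) ∧
      (∀ s, l1dist (P s) (P' s) ≤ ε) ∧ IsExactBisim P' lab R := by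
  classical
  choose μf hμd hμprop using hcentroid
  let sR : Setoid S := ⟨R, hR⟩
  let rep : S → S := fun s => (Quotient.mk sR s).out
  have hrepR : ∀ s, R (rep s) s := fun s => Quotient.mk_out s
  have hrep_congr : ∀ {s t}, R s t → rep s = rep t := by
    intro s t h
    show (Quotient.mk sR s).out = (Quotient.mk sR t).out
    rw [Quotient.sound (h : sR.r s t)]
  have hrep_idem : ∀ s, rep (rep s) = rep s := fun s => hrep_congr (hrepR s)
  -- the centroid of the class of s
  let ν : S → S → ℝ := fun s => μf (rep s)
  have hνnn : ∀ s t, 0 ≤ ν s t := fun s t => (hμd (rep s)).1 t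
  -- classes
  let Cls : S → Set S := fun t => {u | R t u}
  let mP : S → S → ℝ := fun s b => pmass (P s) (Cls b)
  let mN : S → S → ℝ := fun s b => pmass (ν s) (Cls b)
  have hmPnn : ∀ s b, 0 ≤ mP s b := fun s b => pmass_nonneg' (hP s).1 _
  have hmNnn : ∀ s b, 0 ≤ mN s b := fun s b => pmass_nonneg' (hνnn s) _
  -- the perturbed transition function
  let P' : S → S → ℝ := fun s t =>
    if mP s (rep t) = 0 then (if t = rep t then mN s (rep t) else 0)
    else P s t * (mN s (rep t) / mP s (rep t))
  have hP'nn : ∀ s t, 0 ≤ P' s t := by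
    intro s t
    by_cases h0 : mP s (rep t) = 0
    · simp only [P', if_pos h0]
      by_cases h1 : t = rep t
      · rw [if_pos h1]; exact hmNnn s _
      · rw [if_neg h1]
    · simp only [P', if_neg h0]
      exact mul_nonneg ((hP s).1 t) (div_nonneg (hmNnn s _) (hmPnn s _))
  -- fibers of rep
  let F : S → Finset S := fun b => Finset.univ.filter (fun t => rep t = b)
  have hFmem : ∀ b t, t ∈ F b ↔ rep t = b := by intro b t; simp [F]
  have hFempty : ∀ b, rep b ≠ b → F b = ∅ := by
    intro b hb
    refine Finset.eq_empty_of_forall_notMem fun t ht => hb ?_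
    have h1 : rep t = b := (hFmem b t).1 ht
    rw [← h1, hrep_idem]
  -- pmass over a class as a fiber sum
  have hfilter : ∀ b, rep b = b → ∀ (μ : S → ℝ), pmass μ (Cls b) = ∑ t ∈ F b, μ t := by
    intro b hb μ
    rw [pmass_eq_sum']
    refine Finset.sum_congr ?_ fun _ _ => rfl
    refine Finset.filter_congr fun t _ => ?_
    show R b t ↔ rep t = b
    constructor
    · intro h; rw [← hrep_congr h, hb]
    · intro h
      exact h ▸ hrepR t
  -- key per-fiber computations
  have keyP' : ∀ s b, rep b = b → ∑ t ∈ F b, P' s t = mN s b := by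
    intro s b hb
    by_cases h0 : mP s b = 0
    · have hz : ∀ t ∈ F b, P s t = 0 := by
        intro t ht
        have := (hfilter b hb (P s)).symm.trans h0
        exact (Finset.sum_eq_zero_iff_of_nonneg fun u _ => (hP s).1 u).1 this t ht
      have hb' : b ∈ F b := (hFmem b b).2 hb
      rw [Finset.sum_congr rfl (fun t ht => ?_), Finset.sum_ite_eq' (F b) b (fun _ => mN s b)]
      · simp [hb']
      · have hrt : rep t = b := (hFmem b t).1 ht
        show P' s t = if t = b then mN s b else 0
        simp only [P', hrt, if_pos h0]
    · have h0' : 0 < mP s b := lt_of_le_of_ne (hmPnn s b) (Ne.symm h0)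
      have : ∀ t ∈ F b, P' s t = P s t * (mN s b / mP s b) := by
        intro t ht
        have hrt : rep t = b := (hFmem b t).1 ht
        simp only [P', hrt, if_neg h0]
      rw [Finset.sum_congr rfl this, ← Finset.sum_mul, ← hfilter b hb (P s)]
      field_simp
      exact mul_comm _ _
  have keyL1 : ∀ s b, rep b = b → ∑ t ∈ F b, |P s t - P' s t| = |mP s b - mN s b| := by
    intro s b hb
    by_cases h0 : mP s b = 0
    · have hz : ∀ t ∈ F b, P s t = 0 := by
        intro t ht
        have := (hfilter b hb (P s)).symm.trans h0
        exact (Finset.sum_eq_zero_iff_of_nonneg fun u _ => (hP s).1 u).1 this t ht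
      have : ∀ t ∈ F b, |P s t - P' s t| = P' s t := by
        intro t ht
        rw [hz t ht, zero_sub, abs_neg, abs_of_nonneg (hP'nn s t)]
      rw [Finset.sum_congr rfl this, keyP' s b hb, h0, zero_sub, abs_neg,
        abs_of_nonneg (hmNnn s b)]
    · have h0' : 0 < mP s b := lt_of_le_of_ne (hmPnn s b) (Ne.symm h0)
      have : ∀ t ∈ F b, |P s t - P' s t| = P s t * (|mP s b - mN s b| / mP s b) := by
        intro t ht
        have hrt : rep t = b := (hFmem b t).1 ht
        have : P' s t = P s t * (mN s b / mP s b) := by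
          simp only [P', hrt, if_neg h0]
        rw [this]
        have : P s t - P s t * (mN s b / mP s b) = P s t * ((mP s b - mN s b) / mP s b) := by
          field_simp
        rw [this, abs_mul, abs_of_nonneg ((hP s).1 t), abs_div, abs_of_pos h0']
      rw [Finset.sum_congr rfl this, ← Finset.sum_mul, ← hfilter b hb (P s)]
      field_simp
      rfl
  -- total mass of ν s
  have hνsum : ∀ s, ∑ t, ν s t = 1 := by
    intro s
    rw [← tsum_fintype (L := SummationFilter.unconditional _)]
    exact (hμd (rep s)).2.2.tsum_eq
  -- total mass of P' s
  have hP'tot : ∀ s, ∑ t, P' s t = 1 := by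
    intro s
    rw [← Finset.sum_fiberwise Finset.univ rep (P' s)]
    have : ∀ b, ∑ t ∈ F b, P' s t = ∑ t ∈ F b, ν s t := by
      intro b
      by_cases hb : rep b = b
      · rw [keyP' s b hb]; exact hfilter b hb (ν s)
      · rw [hFempty b hb]; simp
    calc ∑ b, ∑ t ∈ Finset.univ.filter (fun t => rep t = b), P' s t
        = ∑ b, ∑ t ∈ F b, ν s t := Finset.sum_congr rfl fun b _ => this b
      _ = ∑ t, ν s t := Finset.sum_fiberwise Finset.univ rep (ν s)
      _ = 1 := hνsum s
  have hP'distr : ∀ s, IsDistr (P' s) := by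
    intro s
    refine ⟨hP'nn s, fun t => ?_, ?_⟩
    · calc P' s t ≤ ∑ u, P' s u :=
          Finset.single_le_sum (fun u _ => hP'nn s u) (Finset.mem_univ t)
        _ = 1 := hP'tot s
    · have := hasSum_fintype (P' s)
      rwa [hP'tot s] at this
  -- pmass of P' over classes
  have hP'class : ∀ s b, rep b = b → pmass (P' s) (Cls b) = mN s b := by
    intro s b hb
    rw [hfilter b hb (P' s), keyP' s b hb]
  -- splitting pmass over rep-dependent sets
  have hsplit : ∀ (μ : S → ℝ) (c : S → Prop),
      pmass μ {t | c (rep t)} =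
        ∑ b, if c b then (if rep b = b then pmass μ (Cls b) else 0) else 0 := by
    intro μ c
    rw [pmass_eq_sum', Finset.sum_filter,
      ← Finset.sum_fiberwise Finset.univ rep (fun t => if t ∈ {t | c (rep t)} then μ t else 0)]
    refine Finset.sum_congr rfl fun b _ => ?_
    by_cases hc : c b
    · rw [if_pos hc]
      by_cases hb : rep b = b
      · rw [if_pos hb, hfilter b hb μ]
        refine Finset.sum_congr rfl fun t ht => ?_
        have hrt : rep t = b := (hFmem b t).1 ht
        rw [if_pos]; show c (rep t); rw [hrt]; exact hc
      · rw [if_neg hb]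
        have : Finset.univ.filter (fun t => rep t = b) = F b := rfl
        rw [this, hFempty b hb, Finset.sum_empty]
    · rw [if_neg hc]
      refine Finset.sum_eq_zero fun t ht => ?_
      have hrt : rep t = b := (hFmem b t).1 ht
      rw [if_neg]; show ¬ c (rep t); rw [hrt]; exact hc
  -- rep-dependent sets are R-closed
  have hclosed : ∀ (c : S → Prop), relImg R {t | c (rep t)} ⊆ {t | c (rep t)} := by
    rintro c t ⟨u, hu, hut⟩
    show c (rep t)
    rw [← hrep_congr hut]
    exact hu
  refine ⟨P', hP'distr, ?_, hR, ?_⟩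
  · -- L1 bound
    intro s
    have hL1 : l1dist (P s) (P' s) =
        ∑ b, if rep b = b then |mP s b - mN s b| else 0 := by
      rw [l1dist, tsum_fintype,
        ← Finset.sum_fiberwise Finset.univ rep (fun t => |P s t - P' s t|)]
      refine Finset.sum_congr rfl fun b _ => ?_
      by_cases hb : rep b = b
      · rw [if_pos hb]; exact keyL1 s b hb
      · rw [if_neg hb]
        have : Finset.univ.filter (fun t => rep t = b) = F b := rfl
        rw [this, hFempty b hb, Finset.sum_empty]
    set d : S → ℝ := fun b => mP s b - mN s b with hd
    have hpos : ∑ b, (if 0 ≤ d b then (if rep b = b then d b else 0) else 0) ≤ ε / 2 := by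
      have h1 := hsplit (P s) (fun b => 0 ≤ d b)
      have h2 := hsplit (ν s) (fun b => 0 ≤ d b)
      have heq : ∑ b, (if 0 ≤ d b then (if rep b = b then d b else 0) else 0) =
          pmass (P s) {t | 0 ≤ d (rep t)} - pmass (ν s) {t | 0 ≤ d (rep t)} := by
        rw [h1, h2, ← Finset.sum_sub_distrib]
        refine Finset.sum_congr rfl fun b _ => ?_
        by_cases hc : 0 ≤ d b <;> by_cases hb : rep b = b <;>
          simp [hc, hb, d, mP, mN]
      rw [heq]
      have := hμprop (rep s) s (hrepR s) {t | 0 ≤ d (rep t)} (hclosed (fun b => 0 ≤ d b))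
      have habs := abs_le.1 this
      exact habs.2
    have hneg : ∑ b, (if 0 ≤ d b then 0 else (if rep b = b then -d b else 0)) ≤ ε / 2 := by
      have h1 := hsplit (P s) (fun b => ¬ 0 ≤ d b)
      have h2 := hsplit (ν s) (fun b => ¬ 0 ≤ d b)
      have heq : ∑ b, (if 0 ≤ d b then 0 else (if rep b = b then -d b else 0)) =
          pmass (ν s) {t | ¬ 0 ≤ d (rep t)} - pmass (P s) {t | ¬ 0 ≤ d (rep t)} := by
        rw [h1, h2, ← Finset.sum_sub_distrib]
        refine Finset.sum_congr rfl fun b _ => ?_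
        by_cases hc : 0 ≤ d b <;> by_cases hb : rep b = b <;>
          simp [hc, hb, d, mP, mN]
      rw [heq]
      have := hμprop (rep s) s (hrepR s) {t | ¬ 0 ≤ d (rep t)} (hclosed (fun b => ¬ 0 ≤ d b))
      have habs := abs_le.1 this
      linarith [habs.1]
    have habs_eq : ∀ b, (if rep b = b then |d b| else 0) =
        (if 0 ≤ d b then (if rep b = b then d b else 0) else 0) +
        (if 0 ≤ d b then 0 else (if rep b = b then -d b else 0)) := by
      intro b
      by_cases hb : rep b = b
      · by_cases hc : 0 ≤ d b
        · rw [if_pos hb, if_pos hc, if_pos hc, if_pos hb, abs_of_nonneg hc, add_zero]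
        · rw [if_pos hb, if_neg hc, if_neg hc, if_pos hb, abs_of_neg (lt_of_not_ge hc), zero_add]
      · by_cases hc : 0 ≤ d b <;> simp [hb, hc]
    rw [hL1, Finset.sum_congr rfl fun b _ => habs_eq b, Finset.sum_add_distrib]
    linarith
  · -- exact bisimulation
    intro s t hst
    refine ⟨hlab s t hst, fun c => ?_⟩
    have hCls : {u | R c u} = Cls (rep c) := by
      ext u
      show R c u ↔ R (rep c) u
      exact ⟨fun h => hR.trans (hrepR c) h, fun h => hR.trans (hR.symm (hrepR c)) h⟩
    have hν_eq : ν s = ν t := by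
      show μf (rep s) = μf (rep t)
      rw [hrep_congr hst]
    rw [hCls, hP'class s (rep c) (hrep_idem c), hP'class t (rep c) (hrep_idem c)]
    show pmass (ν s) _ = pmass (ν t) _
    rw [hν_eq]
end
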